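/- arXiv:1904.09114 — 6 statements merged into one kernel-verified Lean document; each statement's English description precedes it below -/
import Mathlib

section
/- Sectorial separation estimate: Let θ ∈ (0, π/2) and c ≥ 0 satisfy c·tan θ < 1. Then there exists a constant C > 0 such that for all complex numbers λ and w with |arg λ| ≤ π/2 + θ, Re w ≥ 0 and |Im w| ≤ c·Re w, one has |λ + w| ≥ C·(|λ| + |w|). -/
open Real Complex

lemma sector_re_bound (θ : ℝ) (hθ0 : 0 < θ) (hθ2 : θ < π / 2) (lam : ℂ)
    (h : |lam.arg| ≤ π / 2 + θ) (ha : lam.re < 0) :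
    -lam.re ≤ Real.tan θ * |lam.im| := by
  have hne : lam ≠ 0 := by
    intro h0
    rw [h0] at ha
    simp at ha
  have habs : 0 < ‖lam‖ := norm_pos_iff.mpr hne
  have hre : lam.re = ‖lam‖ * Real.cos lam.arg := by
    rw [Complex.cos_arg hne]
    field_simp
  have him : |lam.im| = ‖lam‖ * |Real.sin lam.arg| := by
    rw [Complex.sin_arg, abs_div, _root_.abs_of_pos habs]
    field_simp
  set φ := |lam.arg| with hφ
  have hφ0 : 0 ≤ φ := hφ ▸ abs_nonneg _
  have hφπ : φ ≤ π := Complex.abs_arg_le_pi lam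
  have hcosφ : Real.cos φ = Real.cos lam.arg := Real.cos_abs _
  have hsinφ : Real.sin φ = |Real.sin lam.arg| := by
    rcases le_or_gt 0 lam.arg with hge | hlt
    · rw [hφ, _root_.abs_of_nonneg hge, _root_.abs_of_nonneg]
      exact Real.sin_nonneg_of_nonneg_of_le_pi hge (Complex.arg_le_pi lam)
    · rw [hφ, _root_.abs_of_neg hlt, Real.sin_neg, _root_.abs_of_nonpos]
      exact Real.sin_nonpos_of_nonpos_of_neg_pi_le hlt.le (Complex.neg_pi_lt_arg lam).le
  have hcosφ_neg : Real.cos φ < 0 := by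
    rw [hcosφ]
    nlinarith [hre]
  have hφ_gt : π / 2 < φ := by
    by_contra hcon
    push_neg at hcon
    have : 0 ≤ Real.cos φ := Real.cos_nonneg_of_mem_Icc ⟨by linarith [Real.pi_pos], hcon⟩
    linarith
  set ψ := φ - π / 2 with hψ
  have hψ0 : 0 < ψ := by rw [hψ]; linarith
  have hψθ : ψ ≤ θ := by rw [hψ]; linarith
  have hφeq : φ = π / 2 + ψ := by rw [hψ]; ring
  have hcos_eq : Real.cos φ = -Real.sin ψ := by
    rw [hφeq, Real.cos_add]
    simp
  have hsin_eq : Real.sin φ = Real.cos ψ := by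
    rw [hφeq, Real.sin_add]
    simp
  have hcosθ : 0 < Real.cos θ := Real.cos_pos_of_mem_Ioo ⟨by linarith, hθ2⟩
  have hcosψ : 0 < Real.cos ψ := Real.cos_pos_of_mem_Ioo ⟨by linarith, by linarith⟩
  have hkey : Real.sin ψ * Real.cos θ ≤ Real.sin θ * Real.cos ψ := by
    have hs : Real.sin (ψ - θ) ≤ 0 :=
      Real.sin_nonpos_of_nonpos_of_neg_pi_le (by linarith) (by linarith)
    rw [Real.sin_sub] at hs
    linarith
  have hsinψ_le : Real.sin ψ ≤ Real.tan θ * Real.cos ψ := by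
    rw [Real.tan_eq_sin_div_cos, div_mul_eq_mul_div, le_div_iff₀ hcosθ]
    linarith
  rw [him, ← hsinφ, hsin_eq, hre, hcosφ.symm, hcos_eq]
  have hmul : ‖lam‖ * Real.sin ψ ≤ ‖lam‖ * (Real.tan θ * Real.cos ψ) :=
    mul_le_mul_of_nonneg_left hsinψ_le habs.le
  nlinarith [hmul]

/-- Sectorial separation estimate: if `θ ∈ (0, π/2)`, `c ≥ 0` and `c·tan θ < 1`, then there is
`C > 0` such that for all `λ` in the sector `|arg λ| ≤ π/2 + θ` and all `w` with `Re w ≥ 0`,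
`|Im w| ≤ c·Re w`, one has `|λ + w| ≥ C (|λ| + |w|)`. -/
theorem sectorial_separation (θ : ℝ) (hθ : θ ∈ Set.Ioo 0 (π / 2))
    (c : ℝ) (hc : 0 ≤ c) (hcθ : c * Real.tan θ < 1) :
    ∃ C > 0, ∀ lam w : ℂ, |lam.arg| ≤ π / 2 + θ →
      0 ≤ w.re → |w.im| ≤ c * w.re →
      C * (‖lam‖ + ‖w‖) ≤ ‖lam + w‖ := by
  obtain ⟨hθ0, hθ2⟩ := hθ
  have ht : 0 < Real.tan θ := Real.tan_pos_of_pos_of_lt_pi_div_two hθ0 hθ2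
  set t : ℝ := Real.tan θ with htdef
  have hct : c * t < 1 := hcθ
  -- choose an opaque γ with t < γ and c·γ ≤ (1 + c·t)/2 < 1
  obtain ⟨γ, hγt, hγ0, hcγ⟩ : ∃ γ : ℝ, t < γ ∧ 0 < γ ∧ c * γ ≤ (1 + c * t) / 2 := by
    refine ⟨t + (1 - c * t) / (2 * (c + 1)), ?_, ?_, ?_⟩
    · have hfrac : 0 < (1 - c * t) / (2 * (c + 1)) :=
        div_pos (by linarith) (by linarith)
      linarith
    · have hfrac : 0 < (1 - c * t) / (2 * (c + 1)) :=
        div_pos (by linarith) (by linarith)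
      linarith
    · have he : (1 - c * t) / (2 * (c + 1)) * (2 * (c + 1)) = 1 - c * t :=
        div_mul_cancel₀ _ (by linarith)
      have hfrac : 0 < (1 - c * t) / (2 * (c + 1)) :=
        div_pos (by linarith) (by linarith)
      nlinarith [he, hfrac]
  obtain ⟨M, hMdef⟩ : ∃ M : ℝ, M = 1 + t + (1 + c) * γ := ⟨_, rfl⟩
  have hM0 : 0 < M := by nlinarith
  obtain ⟨K, hK0, hKA, hKB, hKB2⟩ :
      ∃ K : ℝ, 0 < K ∧ 3 + 2 * c ≤ K ∧ 2 * M / (1 - c * t) ≤ K ∧ M / (γ - t) ≤ K := by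
    refine ⟨max (3 + 2 * c) (max (2 * M / (1 - c * t)) (M / (γ - t))),
      lt_of_lt_of_le (by linarith) (le_max_left _ _), le_max_left _ _,
      le_trans (le_max_left _ _) (le_max_right _ _),
      le_trans (le_max_right _ _) (le_max_right _ _)⟩
  refine ⟨1 / K, by positivity, ?_⟩
  intro lam w harg hwre hwim
  set a : ℝ := lam.re with hadef
  set b : ℝ := lam.im with hbdef
  set u : ℝ := w.re with hudef
  set v : ℝ := w.im with hvdef
  set S : ℝ := ‖lam + w‖ with hSdef
  have hS0 : 0 ≤ S := norm_nonneg _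
  have h1 : a + u ≤ S := by
    have := Complex.re_le_norm (lam + w)
    simpa [Complex.add_re, ← hadef, ← hudef] using this
  have h2 : |b + v| ≤ S := by
    have := Complex.abs_im_le_norm (lam + w)
    simpa [Complex.add_im, ← hbdef, ← hvdef] using this
  have hb3 : |b| ≤ |b + v| + |v| := by
    have := abs_add_le (b + v) (-v)
    simpa using this
  have hL : ‖lam‖ ≤ |a| + |b| := Complex.norm_le_abs_re_add_abs_im _
  have hW : ‖w‖ ≤ u + c * u := by
    refine le_trans (Complex.norm_le_abs_re_add_abs_im _) ?_
    rw [← hudef, ← hvdef, _root_.abs_of_nonneg hwre]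
    linarith
  have habs_b : (0:ℝ) ≤ |b| := abs_nonneg b
  have habs_lam : (0:ℝ) ≤ ‖lam‖ := norm_nonneg _
  have habs_w : (0:ℝ) ≤ ‖w‖ := norm_nonneg _
  have hsec : a < 0 → -a ≤ t * |b| := by
    intro ha'
    have := sector_re_bound θ hθ0 hθ2 lam harg (hadef ▸ ha')
    rw [← htdef, ← hadef, ← hbdef] at this
    exact this
  clear_value t a b u v S
  rw [div_mul_eq_mul_div, one_mul, div_le_iff₀ hK0]
  -- goal : Complex.abs lam + Complex.abs w ≤ S * K
  rcases le_or_gt 0 a with ha | ha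
  · -- Case A : Re lam ≥ 0
    rw [_root_.abs_of_nonneg ha] at hL
    have hbS : |b| ≤ S + c * (a + u) := by
      have hv : |v| ≤ c * (a + u) := le_trans hwim (by nlinarith)
      linarith
    nlinarith [mul_nonneg hc (sub_nonneg.2 h1), sub_nonneg.2 h1,
      mul_nonneg hS0 (sub_nonneg.2 hKA), mul_nonneg hc (add_nonneg ha hwre)]
  · -- Case B : Re lam < 0
    have hb : -a ≤ t * |b| := hsec ha
    rw [_root_.abs_of_neg ha] at hL
    rcases le_or_gt u (γ * |b|) with hu | hu
    · -- Case B1 : u small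
      have hS1 : (1 - c * t) / 2 * |b| ≤ S := by
        have hcu : c * u ≤ c * (γ * |b|) := mul_le_mul_of_nonneg_left hu hc
        have hcγb : c * γ * |b| ≤ (1 + c * t) / 2 * |b| :=
          mul_le_mul_of_nonneg_right hcγ habs_b
        linarith [hwim, h2, hb3]
      have hLb : ‖lam‖ + ‖w‖ ≤ M * |b| := by
        have h5 : (1 + c) * u ≤ (1 + c) * (γ * |b|) :=
          mul_le_mul_of_nonneg_left hu (by linarith)
        rw [hMdef]
        linarith [hb, hL, hW]
      calc ‖lam‖ + ‖w‖ ≤ M * |b| := hLb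
        _ = 2 * M / (1 - c * t) * ((1 - c * t) / 2 * |b|) := by
            have hne : (1 - c * t) ≠ 0 := by linarith
            field_simp
        _ ≤ K * S := mul_le_mul hKB hS1 (mul_nonneg (by linarith) habs_b) hK0.le
        _ = S * K := mul_comm _ _
    · -- Case B2 : u large
      have hMK : M ≤ K * (γ - t) := by
        rw [div_le_iff₀ (by linarith : (0:ℝ) < γ - t)] at hKB2
        exact hKB2
      have hS2 : (γ - t) * u ≤ γ * S := by
        have h6 : γ * (-a) ≤ γ * (t * |b|) := mul_le_mul_of_nonneg_left hb hγ0.le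
        have h7 : t * (γ * |b|) ≤ t * u := mul_le_mul_of_nonneg_left hu.le ht.le
        have h8 : γ * (a + u) ≤ γ * S := mul_le_mul_of_nonneg_left h1 hγ0.le
        linarith [h6, h7, h8]
      have hLu : γ * (‖lam‖ + ‖w‖) ≤ M * u := by
        have h9 : (1 + t) * (γ * |b|) ≤ (1 + t) * u :=
          mul_le_mul_of_nonneg_left hu.le (by linarith)
        have hMu : M * u = (1 + t + (1 + c) * γ) * u := by rw [hMdef]
        linarith [mul_le_mul_of_nonneg_left hL hγ0.le,
          mul_le_mul_of_nonneg_left hW hγ0.le,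
          mul_le_mul_of_nonneg_left hb hγ0.le, h9, hMu]
      have hfinal : (γ * (γ - t)) * (‖lam‖ + ‖w‖)
          ≤ (γ * (γ - t)) * (S * K) := by
        have F1 : (γ - t) * (γ * (‖lam‖ + ‖w‖)) ≤ (γ - t) * (M * u) :=
          mul_le_mul_of_nonneg_left hLu (by linarith)
        have F2 : M * ((γ - t) * u) ≤ M * (γ * S) := mul_le_mul_of_nonneg_left hS2 hM0.le
        have F3 : γ * (M * S) ≤ γ * (K * (γ - t) * S) :=
          mul_le_mul_of_nonneg_left (mul_le_mul_of_nonneg_right hMK hS0) hγ0.le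
        linarith [F1, F2, F3]
      exact le_of_mul_le_mul_left hfinal (mul_pos hγ0 (by linarith))
end

section
/- Resolvent symbol lower bound: Let d ≥ 1, δ ∈ (0,2], c₀ > 0, c ≥ 0 and θ ∈ (0, π/2) with c·tan θ < 1. Let a : ℝ^d → ℂ satisfy Re a(ξ) ≥ c₀·⟨ξ⟩^δ and |Im a(ξ)| ≤ c·Re a(ξ) for all ξ ∈ ℝ^d. Then there exists C > 0 such that for every λ ∈ ℂ with |arg λ| ≤ π/2 + θ and every ξ ∈ ℝ^d, one has (1 + |λ|^{1/δ} + ‖ξ‖)^δ ≤ C·|λ + a(ξ)|. -/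
open Real Complex

set_option maxHeartbeats 1600000

/-- Resolvent symbol lower bound: for an elliptic symbol of order `δ` satisfying the sector
condition `|Im a(ξ)| ≤ c·Re a(ξ)` with `c·tan θ < 1`, there is `C > 0` such that
`(1 + |λ|^{1/δ} + ‖ξ‖)^δ ≤ C·|λ + a(ξ)|` for all `λ` in the sector `|arg λ| ≤ π/2 + θ`. -/
theorem resolvent_symbol_lower_bound (d : ℕ) (hd : 1 ≤ d)
    (δ c₀ c θ : ℝ) (hδ : δ ∈ Set.Ioc 0 2) (hc₀ : 0 < c₀) (hc : 0 ≤ c)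
    (hθ : θ ∈ Set.Ioo 0 (π / 2)) (hcθ : c * Real.tan θ < 1)
    (a : EuclideanSpace ℝ (Fin d) → ℂ)
    (hell : ∀ ξ, c₀ * (1 + ‖ξ‖ ^ 2) ^ (δ / 2) ≤ (a ξ).re)
    (hsec : ∀ ξ, |(a ξ).im| ≤ c * (a ξ).re) :
    ∃ C > 0, ∀ lam : ℂ, |lam.arg| ≤ π / 2 + θ → ∀ ξ,
      (1 + ‖lam‖ ^ (1 / δ) + ‖ξ‖) ^ δ ≤ C * ‖lam + a ξ‖ := by
  obtain ⟨hδ0, hδ2⟩ := hδ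
  set t := Real.tan θ with ht
  have htpos : 0 < t := Real.tan_pos_of_pos_of_lt_pi_div_two hθ.1 hθ.2
  have hs0 : 0 ≤ c * t := mul_nonneg hc htpos.le
  have hs1 : 0 < 1 - c * t := by linarith
  set R := (1 + t) / (1 - c * t) with hR
  have hR1 : 1 ≤ R := by rw [hR, le_div_iff₀ hs1]; linarith
  have hRpos : (0:ℝ) < R := lt_of_lt_of_le one_pos hR1
  have hcR : 0 ≤ c * R := mul_nonneg hc hRpos.le
  set C₁ := (1 + t) * (1 + c * R) + (1 + c * R) + R with hC₁
  have hC₁pos : 0 < C₁ := by positivity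
  clear_value t R C₁
  refine ⟨9 * (1 + 2 / c₀) * C₁ * 2, by positivity, ?_⟩
  intro lam hlam ξ
  set A := ‖lam‖ with hA
  have hA0 : 0 ≤ A := norm_nonneg lam
  set n := ‖ξ‖ with hn
  have hn0 : 0 ≤ n := norm_nonneg ξ
  set p := lam.re with hp
  set q := lam.im with hq
  set u := (a ξ).re with hu
  set v := (a ξ).im with hv
  have hgξ : (0:ℝ) < (1 + n ^ 2) ^ (δ / 2) :=
    Real.rpow_pos_of_pos (by positivity) _
  have hupos : 0 < u := lt_of_lt_of_le (by positivity) (hell ξ)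
  have hvu : |v| ≤ c * u := hsec ξ
  have hell2 : c₀ * (1 + n ^ 2) ^ (δ / 2) ≤ u := by rw [hn, hu]; exact hell ξ
  clear_value A n p q u v
  -- sector lower bound for the real part of λ
  have hsinθ : 0 ≤ Real.sin θ :=
    Real.sin_nonneg_of_nonneg_of_le_pi hθ.1.le (by linarith [Real.pi_pos, hθ.2])
  have hcosθ : 0 < Real.cos θ :=
    Real.cos_pos_of_mem_Ioo ⟨by linarith [hθ.1, Real.pi_pos], hθ.2⟩
  have hsector : -(Real.sin θ) * A ≤ p := by
    rcases eq_or_ne lam 0 with h0 | h0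
    · simp [hA, hp, h0]
    · have habs : 0 < A := by rw [hA]; exact norm_pos_iff.mpr h0
      have hcos : Real.cos lam.arg = p / A := by rw [hp, hA]; exact Complex.cos_arg h0
      have h1 : Real.cos (π / 2 + θ) ≤ Real.cos lam.arg := by
        rw [← Real.cos_abs lam.arg]
        exact Real.cos_le_cos_of_nonneg_of_le_pi (abs_nonneg _)
          (by linarith [Real.pi_pos, hθ.2]) hlam
      have h2 : Real.cos (π / 2 + θ) = -(Real.sin θ) := by
        rw [Real.cos_add]; simp
      rw [h2, hcos, le_div_iff₀ habs] at h1
      linarith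
  have hsq : A ^ 2 = p ^ 2 + q ^ 2 := by
    rw [hA, Complex.sq_norm, Complex.normSq_apply, ← hp, ← hq]; ring
  set M := |p + u| + |q + v| with hM
  have hM0 : 0 ≤ M := by positivity
  clear_value M
  have hpuM : |p + u| ≤ M := by rw [hM]; linarith [abs_nonneg (q + v)]
  have hqtri : |q| ≤ M + c * u := by
    have h1 : |q| ≤ |q + v| + |v| := by
      calc |q| = |(q + v) + (-v)| := by ring_nf
        _ ≤ |q + v| + |-v| := abs_add_le _ _
        _ = |q + v| + |v| := by rw [abs_neg]
    have h2 : (0:ℝ) ≤ |p + u| := abs_nonneg _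
    rw [hM]; linarith
  have hutri : u ≤ |p + u| + |p| := by
    calc u ≤ |u| := le_abs_self u
      _ = |(p + u) + (-p)| := by ring_nf
      _ ≤ |p + u| + |-p| := abs_add_le _ _
      _ = |p + u| + |p| := by rw [abs_neg]
  -- key bounds on u, |p|, |q| in terms of M
  have hfac1 : 1 ≤ (1 + t) * (1 + c * R) := by
    linarith [mul_nonneg htpos.le hcR, htpos, hcR]
  have key : u ≤ R * M ∧ |p| ≤ (1 + t) * (1 + c * R) * M ∧ |q| ≤ (1 + c * R) * M := by
    rcases le_or_gt 0 p with hp0 | hp0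
    · have hpu : |p + u| = p + u := _root_.abs_of_nonneg (by linarith)
      have huM : u ≤ M := by rw [hpu] at hpuM; linarith
      have hpM : |p| ≤ M := by
        rw [_root_.abs_of_nonneg hp0]; rw [hpu] at hpuM; linarith
      have huRM : u ≤ R * M := le_trans huM (le_mul_of_one_le_left hM0 hR1)
      have hcu : c * u ≤ c * R * M := by
        have h := mul_le_mul_of_nonneg_left huRM hc; linarith [h]
      refine ⟨huRM, ?_, by linarith⟩
      have hpf : M ≤ (1 + t) * (1 + c * R) * M := le_mul_of_one_le_left hM0 hfac1
      linarith
    · -- from the sector: |p| ≤ t * |q|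
      have hnegp : 0 < -p := by linarith
      have hsA : -p ≤ Real.sin θ * A := by linarith
      have hsq1 : p ^ 2 ≤ Real.sin θ ^ 2 * A ^ 2 := by
        linarith [mul_self_le_mul_self hnegp.le hsA]
      have hc2 : Real.cos θ ^ 2 = 1 - Real.sin θ ^ 2 := by
        have := Real.sin_sq_add_cos_sq θ; linarith
      have hAsub : Real.sin θ ^ 2 * A ^ 2 = Real.sin θ ^ 2 * (p ^ 2 + q ^ 2) := by
        rw [hsq]
      have hsq2 : (Real.cos θ * |p|) ^ 2 ≤ (Real.sin θ * |q|) ^ 2 := by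
        have hg1 : (Real.cos θ * |p|) ^ 2 = (1 - Real.sin θ ^ 2) * p ^ 2 := by
          rw [mul_pow, _root_.sq_abs, hc2]
        have hg2 : (Real.sin θ * |q|) ^ 2 = Real.sin θ ^ 2 * q ^ 2 := by
          rw [mul_pow, _root_.sq_abs]
        rw [hg1, hg2]; linarith [hsq1, hAsub]
      have hlin : Real.cos θ * |p| ≤ Real.sin θ * |q| :=
        (pow_le_pow_iff_left₀ (mul_nonneg hcosθ.le (abs_nonneg p))
          (mul_nonneg hsinθ (abs_nonneg q)) two_ne_zero).mp hsq2
      have hpq : |p| ≤ t * |q| := by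
        rw [ht, Real.tan_eq_sin_div_cos, div_mul_eq_mul_div, le_div_iff₀ hcosθ]
        linarith
      have huRM : u ≤ R * M := by
        have h2 : t * |q| ≤ t * (M + c * u) := mul_le_mul_of_nonneg_left hqtri htpos.le
        have h1 : (1 - c * t) * u ≤ (1 + t) * M := by linarith [hutri, hpq, hpuM, h2]
        rw [hR, div_mul_eq_mul_div, le_div_iff₀ hs1]
        linarith [h1]
      have hcu : c * u ≤ c * R * M := by
        have h := mul_le_mul_of_nonneg_left huRM hc; linarith [h]
      have hq' : |q| ≤ (1 + c * R) * M := by linarith [hqtri, hcu]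
      refine ⟨huRM, ?_, hq'⟩
      have h3 : t * |q| ≤ t * ((1 + c * R) * M) := mul_le_mul_of_nonneg_left hq' htpos.le
      have hnn : 0 ≤ (1 + c * R) * M := mul_nonneg (by linarith) hM0
      linarith [hpq, h3, hnn]
  obtain ⟨k1, k2, k3⟩ := key
  have hAbound : A + u ≤ C₁ * M := by
    have h1 : A ≤ |p| + |q| := by
      rw [hA, hp, hq]; exact Complex.norm_le_abs_re_add_abs_im lam
    rw [hC₁]; linarith [k1, k2, k3, h1]
  have hM2 : M ≤ 2 * ‖lam + a ξ‖ := by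
    have h1 : |(lam + a ξ).re| ≤ ‖lam + a ξ‖ := Complex.abs_re_le_norm _
    have h2 : |(lam + a ξ).im| ≤ ‖lam + a ξ‖ := Complex.abs_im_le_norm _
    rw [Complex.add_re, ← hp, ← hu] at h1
    rw [Complex.add_im, ← hq, ← hv] at h2
    rw [hM]; linarith
  -- step A : (1 + A^(1/δ) + n)^δ ≤ 9 * (1 + A + n^δ)
  set m := max 1 (max (A ^ (1/δ)) n) with hm
  have hm0 : (0:ℝ) ≤ m := le_trans zero_le_one (le_max_left _ _)
  clear_value m
  have hsum : 1 + A ^ (1/δ) + n ≤ 3 * m := by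
    have h1 : (1:ℝ) ≤ m := by rw [hm]; exact le_max_left _ _
    have h2 : A ^ (1/δ) ≤ m := by rw [hm]; exact le_trans (le_max_left _ _) (le_max_right _ _)
    have h3 : n ≤ m := by rw [hm]; exact le_trans (le_max_right _ _) (le_max_right _ _)
    linarith
  have hA1 : (A ^ (1/δ)) ^ δ = A := by
    rw [← Real.rpow_mul hA0, one_div, inv_mul_cancel₀ hδ0.ne', Real.rpow_one]
  have hrp : (1 + A ^ (1/δ) + n) ^ δ ≤ (3 * m) ^ δ :=
    Real.rpow_le_rpow (by positivity) hsum hδ0.le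
  have h3m : ((3:ℝ) * m) ^ δ = 3 ^ δ * m ^ δ := Real.mul_rpow (by norm_num) hm0
  have h9 : (3:ℝ) ^ δ ≤ 9 := by
    have h := Real.rpow_le_rpow_of_exponent_le (by norm_num : (1:ℝ) ≤ 3) hδ2
    rwa [show (3:ℝ) ^ (2:ℝ) = 9 by
      rw [show (2:ℝ) = ((2:ℕ):ℝ) by norm_num, Real.rpow_natCast]; norm_num] at h
  have hnδ0 : 0 ≤ n ^ δ := Real.rpow_nonneg hn0 δ
  have hmδ : m ^ δ ≤ 1 + A + n ^ δ := by
    rcases max_choice (1:ℝ) (max (A ^ (1/δ)) n) with he | he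
    · rw [hm, he, Real.one_rpow]; linarith
    · rw [hm, he]
      rcases max_choice (A ^ (1/δ)) n with he2 | he2 <;> rw [he2]
      · rw [hA1]; linarith
      · linarith
  have stepA : (1 + A ^ (1/δ) + n) ^ δ ≤ 9 * (1 + A + n ^ δ) := by
    have hm' : 0 ≤ m ^ δ := Real.rpow_nonneg hm0 δ
    calc (1 + A ^ (1/δ) + n) ^ δ ≤ (3 * m) ^ δ := hrp
      _ = 3 ^ δ * m ^ δ := h3m
      _ ≤ 9 * (1 + A + n ^ δ) :=
          mul_le_mul h9 hmδ hm' (by norm_num)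
  -- step B : 1 + A + n^δ ≤ (1 + 2/c₀) * (A + u)
  have hnδ : n ^ δ ≤ (1 + n ^ 2) ^ (δ / 2) := by
    have h1 : n ^ δ = ((n : ℝ) ^ 2) ^ (δ / 2) := by
      rw [← Real.rpow_natCast n 2, ← Real.rpow_mul hn0]
      norm_num
      congr 1
      ring
    rw [h1]
    exact Real.rpow_le_rpow (by positivity) (by linarith [sq_nonneg n]) (by positivity)
  have hone : (1:ℝ) ≤ (1 + n ^ 2) ^ (δ / 2) :=
    Real.one_le_rpow (by linarith [sq_nonneg n]) (by positivity)
  have hell' : (1 + n ^ 2) ^ (δ / 2) ≤ u / c₀ := by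
    rw [le_div_iff₀ hc₀]; linarith [hell2]
  have stepB : (1:ℝ) + A + n ^ δ ≤ (1 + 2 / c₀) * (A + u) := by
    have h2 : 1 + n ^ δ ≤ 2 * (u / c₀) := by linarith
    have h4 : (0:ℝ) ≤ 2 / c₀ := by positivity
    have hA4 : 0 ≤ 2 / c₀ * A := mul_nonneg h4 hA0
    have h5 : 2 * (u / c₀) = 2 / c₀ * u := by ring
    linarith [h2, hA4, hupos, h5]
  -- assemble
  have hfac : (0:ℝ) ≤ 1 + 2 / c₀ := by positivity
  calc (1 + A ^ (1/δ) + n) ^ δ ≤ 9 * (1 + A + n ^ δ) := stepA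
    _ ≤ 9 * ((1 + 2 / c₀) * (A + u)) := by linarith [stepB]
    _ ≤ 9 * ((1 + 2 / c₀) * (C₁ * M)) := by
        have h6 := mul_le_mul_of_nonneg_left hAbound hfac
        linarith [h6]
    _ ≤ 9 * ((1 + 2 / c₀) * (C₁ * (2 * ‖lam + a ξ‖))) := by
        have h5 := mul_le_mul_of_nonneg_left hM2 hC₁pos.le
        have h7 := mul_le_mul_of_nonneg_left h5 hfac
        linarith [h7]
    _ = 9 * (1 + 2 / c₀) * C₁ * 2 * ‖lam + a ξ‖ := by ring
end

section
/- Uniform resolvent-type bound for elliptic sector symbols: Let d ≥ 1, δ ∈ (0,2], c₀ > 0, c ≥ 0 and θ ∈ (0, π/2) with c·tan θ < 1. Let a : ℝ^d → ℂ satisfy Re a(ξ) ≥ c₀·⟨ξ⟩^δ and |Im a(ξ)| ≤ c·Re a(ξ) for all ξ ∈ ℝ^d. Then there exists C > 0 such that for every λ ∈ ℂ with λ ≠ 0 and |arg λ| ≤ π/2 + θ and every ξ ∈ ℝ^d, one has λ + a(ξ) ≠ 0 and |λ|·|(λ + a(ξ))⁻¹| ≤ C. -/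
open Real Complex

set_option maxHeartbeats 1000000

lemma core_ineq (t c x y u v : ℝ) (ht : 0 < t) (hc : 0 ≤ c) (hct : c*t < 1)
    (hu : 0 < u) (hv : |v| ≤ c*u)
    (hx : 0 ≤ x ∨ (x ≤ 0 ∧ -x ≤ t * |y|)) :
    (1-c*t)^2 * (x^2 + y^2)
      ≤ ((4+4*c^2)*(1-c*t)^2 + 4*(1+t^2)*(1+c^2)) * ((x+u)^2 + (y+v)^2) := by
  have hD : 0 < 1 - c*t := by linarith
  have hD1 : 1 - c*t ≤ 1 := by nlinarith
  have hD2 : (1-c*t)^2 ≤ 1 := by nlinarith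
  have hv' : -(c*u) ≤ v ∧ v ≤ c*u := abs_le.mp hv
  have htri : |y| ≤ |y+v| + |v| := by
    calc |y| = |(y+v) + (-v)| := by ring_nf
    _ ≤ |y+v| + |-v| := abs_add_le _ _
    _ = |y+v| + |v| := by rw [abs_neg]
  have hS : (0:ℝ) ≤ (x+u)^2 + (y+v)^2 := by positivity
  rcases hx with hx | ⟨hx, hxy⟩
  · have hx2 : x^2 ≤ (x+u)^2 := by nlinarith
    rcases le_or_gt (|y|/2) (|y+v|) with h | h
    · have h1 : y^2 ≤ 4*(y+v)^2 := by
        nlinarith [_root_.sq_abs y, _root_.sq_abs (y+v), abs_nonneg y, abs_nonneg (y+v)]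
      have g1 : 0 ≤ (1 - (1-c*t)^2) * (x^2 + y^2) :=
        mul_nonneg (by nlinarith) (by positivity)
      have g2 : 0 ≤ ((4+4*c^2)*(1-c*t)^2 + 4*(1+t^2)*(1+c^2) - 4) *
          ((x+u)^2 + (y+v)^2) := by
        have : (0:ℝ) ≤ (4+4*c^2)*(1-c*t)^2 + 4*(1+t^2)*(1+c^2) - 4 := by nlinarith
        positivity
      have g3 : 0 ≤ 3*(x+u)^2 := by positivity
      nlinarith [g1, g2, h1, hx2]
    · have h2 : |y| ≤ 2*(c*u) := by linarith [hv, htri]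
      have h3 : y^2 ≤ 4*c^2*u^2 := by nlinarith [_root_.sq_abs y, abs_nonneg y]
      have hu2 : u^2 ≤ (x+u)^2 := by nlinarith [mul_nonneg hx hu.le, sq_nonneg x]
      have hxy2 : x^2 + y^2 ≤ (1+4*c^2)*(x+u)^2 := by
        have := mul_le_mul_of_nonneg_left hu2 (by positivity : (0:ℝ) ≤ 4*c^2)
        linarith
      have e1 := mul_le_mul_of_nonneg_left hxy2 (sq_nonneg (1-c*t))
      have g2 : 0 ≤ 3*(1-c*t)^2*(x+u)^2 := by positivity
      have g3 : 0 ≤ (4+4*c^2)*(1-c*t)^2*(y+v)^2 := by positivity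
      have g4 : 0 ≤ 4*(1+t^2)*(1+c^2)*((x+u)^2+(y+v)^2) := by positivity
      nlinarith [e1, g2, g3, g4]
  · have h0 : x^2 ≤ t^2 * y^2 := by nlinarith [_root_.sq_abs y, abs_nonneg y]
    rcases le_or_gt ((1-c*t)*|y|) (2*|y+v|) with h | h
    · have h1 : (1-c*t)^2*y^2 ≤ 4*(y+v)^2 := by
        have := pow_le_pow_left₀ (mul_nonneg hD.le (abs_nonneg y)) h 2
        nlinarith [_root_.sq_abs y, _root_.sq_abs (y+v)]
      have e1 := mul_le_mul_of_nonneg_left h0 (sq_nonneg (1-c*t))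
      have e2 := mul_le_mul_of_nonneg_left h1 (sq_nonneg t)
      have g1 : 0 ≤ 4*(1+t^2)*c^2*(y+v)^2 := by positivity
      have g2 : 0 ≤ 4*(1+t^2)*(1+c^2)*(x+u)^2 := by positivity
      have g3 : 0 ≤ (4+4*c^2)*(1-c*t)^2*((x+u)^2+(y+v)^2) := by positivity
      nlinarith [e1, e2, h1, g1, g2, g3]
    · have hA : (1+c*t)*|y| ≤ 2*(c*u) := by nlinarith [htri, hv, abs_nonneg y, abs_nonneg (y+v)]
      have hP : (0:ℝ) < 1 + c*t := by nlinarith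
      have hB : (1-c*t)*u ≤ (1+c*t)*(x+u) := by
        have h5 : t * ((1+c*t)*|y|) ≤ t * (2*(c*u)) := mul_le_mul_of_nonneg_left hA ht.le
        nlinarith [abs_nonneg y]
      have hB2 : ((1-c*t)*u)^2 ≤ ((1+c*t)*(x+u))^2 :=
        pow_le_pow_left₀ (mul_nonneg hD.le hu.le) hB 2
      have hA2 : ((1+c*t)*|y|)^2 ≤ (2*(c*u))^2 :=
        pow_le_pow_left₀ (mul_nonneg hP.le (abs_nonneg y)) hA 2
      have hA2' : (1+c*t)^2*y^2 ≤ 4*c^2*u^2 := by nlinarith [hA2, _root_.sq_abs y]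
      have hB2' : (1-c*t)^2*u^2 ≤ (1+c*t)^2*(x+u)^2 := by nlinarith [hB2]
      have hC : (1-c*t)^2*y^2 ≤ 4*c^2*(x+u)^2 := by
        have hk1 : (1+c*t)^2 * ((1-c*t)^2*y^2) ≤ (1+c*t)^2 * (4*c^2*(x+u)^2) := by
          have e1 := mul_le_mul_of_nonneg_left hA2' (sq_nonneg (1-c*t))
          have e2 := mul_le_mul_of_nonneg_left hB2' (by positivity : (0:ℝ) ≤ 4*c^2)
          nlinarith [e1, e2]
        exact le_of_mul_le_mul_left hk1 (by positivity)
      have e1 := mul_le_mul_of_nonneg_left h0 (sq_nonneg (1-c*t))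
      have e2 := mul_le_mul_of_nonneg_left hC (sq_nonneg t)
      have g1 : 0 ≤ (4+4*t^2)*(x+u)^2 := by positivity
      have g2 : 0 ≤ 4*(1+t^2)*(1+c^2)*(y+v)^2 := by positivity
      have g3 : 0 ≤ (4+4*c^2)*(1-c*t)^2*((x+u)^2+(y+v)^2) := by positivity
      nlinarith [e1, e2, hC, g1, g2, g3]

open Real Complex


/-- Uniform resolvent-type bound for elliptic sector symbols: with the ellipticity and sector
hypotheses, there is `C > 0` such that `λ + a(ξ) ≠ 0` and `|λ|·|(λ + a(ξ))⁻¹| ≤ C` for all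
`λ ≠ 0` in the sector `|arg λ| ≤ π/2 + θ` and all `ξ`. -/
theorem uniform_resolvent_bound (d : ℕ) (hd : 1 ≤ d)
    (δ c₀ c θ : ℝ) (hδ : δ ∈ Set.Ioc 0 2) (hc₀ : 0 < c₀) (hc : 0 ≤ c)
    (hθ : θ ∈ Set.Ioo 0 (π / 2)) (hcθ : c * Real.tan θ < 1)
    (a : EuclideanSpace ℝ (Fin d) → ℂ)
    (hell : ∀ ξ, c₀ * (1 + ‖ξ‖ ^ 2) ^ (δ / 2) ≤ (a ξ).re)
    (hsec : ∀ ξ, |(a ξ).im| ≤ c * (a ξ).re) :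
    ∃ C > 0, ∀ lam : ℂ, lam ≠ 0 → |lam.arg| ≤ π / 2 + θ → ∀ ξ,
      lam + a ξ ≠ 0 ∧ ‖lam‖ * ‖(lam + a ξ)⁻¹‖ ≤ C := by
  obtain ⟨hθ0, hθ2⟩ := hθ
  set t := Real.tan θ with htdef
  have ht : 0 < t := Real.tan_pos_of_pos_of_lt_pi_div_two hθ0 hθ2
  have hD : 0 < 1 - c*t := by linarith
  set N : ℝ := (4+4*c^2)*(1-c*t)^2 + 4*(1+t^2)*(1+c^2) with hNdef
  have hN : 0 < N := by positivity
  have hCsq : 0 < N / (1-c*t)^2 := by positivity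
  refine ⟨Real.sqrt (N / (1-c*t)^2), Real.sqrt_pos.mpr hCsq, ?_⟩
  intro lam hlam harg ξ
  set C := Real.sqrt (N / (1-c*t)^2) with hCdef
  have hC0 : 0 < C := Real.sqrt_pos.mpr hCsq
  -- ellipticity
  have hu : 0 < (a ξ).re := by
    have h1 : (1:ℝ) ≤ (1 + ‖ξ‖ ^ 2) ^ (δ / 2) :=
      Real.one_le_rpow (by nlinarith [sq_nonneg ‖ξ‖]) (by linarith [hδ.1])
    nlinarith [hell ξ]
  -- geometry of the sector
  have hgeo : 0 ≤ lam.re ∨ (lam.re ≤ 0 ∧ -lam.re ≤ t * |lam.im|) := by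
    rcases le_or_gt 0 lam.re with hre | hre
    · exact Or.inl hre
    refine Or.inr ⟨hre.le, ?_⟩
    have hsin : 0 < Real.sin θ := Real.sin_pos_of_pos_of_lt_pi hθ0 (by linarith [Real.pi_pos])
    have hcosθ : 0 < Real.cos θ := Real.cos_pos_of_mem_Ioo ⟨by linarith, hθ2⟩
    have habs : 0 < ‖lam‖ := norm_pos_iff.mpr hlam
    have hcos : Real.cos (π/2+θ) ≤ Real.cos |lam.arg| :=
      Real.cos_le_cos_of_nonneg_of_le_pi (abs_nonneg _) (by linarith) harg
    rw [Real.cos_abs, Complex.cos_arg hlam, add_comm (π/2) θ, Real.cos_add_pi_div_two] at hcos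
    have h1 : -lam.re ≤ Real.sin θ * ‖lam‖ := by
      rw [le_div_iff₀ habs] at hcos
      linarith
    have h2 : (-lam.re)^2 ≤ (Real.sin θ)^2 * (lam.re^2 + lam.im^2) := by
      have := pow_le_pow_left₀ (by linarith : (0:ℝ) ≤ -lam.re) h1 2
      have hsq : (‖lam‖)^2 = lam.re^2 + lam.im^2 := by
        rw [Complex.sq_norm, Complex.normSq_apply]; ring
      nlinarith [this, hsq]
    have h3 : (Real.cos θ * (-lam.re))^2 ≤ (Real.sin θ * |lam.im|)^2 := by
      have hpyth := Real.sin_sq_add_cos_sq θ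
      nlinarith [_root_.sq_abs lam.im]
    have h4 : Real.cos θ * (-lam.re) ≤ Real.sin θ * |lam.im| := by
      have := Real.sqrt_le_sqrt h3
      rwa [Real.sqrt_sq (mul_nonneg hcosθ.le (by linarith)), Real.sqrt_sq (by positivity)] at this
    rw [htdef, Real.tan_eq_sin_div_cos]
    rw [div_mul_eq_mul_div, le_div_iff₀ hcosθ]
    linarith
  -- apply the core inequality
  have key := core_ineq t c lam.re lam.im (a ξ).re (a ξ).im ht hc hcθ hu (hsec ξ) hgeo
  have hsqlam : (‖lam‖)^2 = lam.re^2 + lam.im^2 := by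
    rw [Complex.sq_norm, Complex.normSq_apply]; ring
  have hsqsum : (‖lam + a ξ‖)^2 = (lam.re + (a ξ).re)^2 + (lam.im + (a ξ).im)^2 := by
    rw [Complex.sq_norm, Complex.normSq_apply, Complex.add_re, Complex.add_im]; ring
  have hmain : ‖lam‖ ≤ C * ‖lam + a ξ‖ := by
    have hsq : (‖lam‖)^2 ≤ (C * ‖lam + a ξ‖)^2 := by
      have hc2 : C^2 = N / (1-c*t)^2 := Real.sq_sqrt hCsq.le
      rw [mul_pow, hc2, hsqlam, hsqsum]
      rw [div_mul_eq_mul_div, le_div_iff₀ (by positivity)]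
      nlinarith [key]
    have := Real.sqrt_le_sqrt hsq
    rwa [Real.sqrt_sq (norm_nonneg _), Real.sqrt_sq (by positivity)] at this
  have hne : lam + a ξ ≠ 0 := by
    intro h
    rw [h] at hmain
    simp at hmain
    exact hlam hmain
  refine ⟨hne, ?_⟩
  rw [norm_inv]
  rw [mul_inv_le_iff₀ (norm_pos_iff.mpr hne)]  -- maybe wrong name
  linarith [hmain]
end

section
/- Second derivative bound for the reciprocal of a shifted elliptic symbol: Let d ≥ 1, δ > 0, c > 0, C₁, C₂ > 0, λ ∈ ℂ, and let a : ℝ^d → ℂ be twice continuously differentiable with ‖fderiv a (ξ)‖ ≤ C₁·⟨ξ⟩^{δ-1}, ‖iteratedFDeriv 2 a (ξ)‖ ≤ C₂·⟨ξ⟩^{δ-2}, and |λ + a(ξ)| ≥ c·⟨ξ⟩^δ for all ξ ∈ ℝ^d. Then there exists a constant C' > 0 depending only on c, C₁, C₂ such that for every ξ ∈ ℝ^d, ‖iteratedFDeriv 2 (fun ξ => (λ + a(ξ))⁻¹) (ξ)‖ ≤ C'·⟨ξ⟩^{-δ-2}. -/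
open Real Complex

set_option maxHeartbeats 1000000

lemma aux_norm_smulRight {E F : Type*} [NormedAddCommGroup E] [NormedSpace ℝ E]
    [NormedAddCommGroup F] [NormedSpace ℝ F] [NormedSpace ℂ F]
    (W : E →L[ℝ] ℂ) (v : F) : ‖W.smulRight v‖ ≤ ‖W‖ * ‖v‖ := by
  refine ContinuousLinearMap.opNorm_le_bound _ (by positivity) fun x => ?_
  rw [ContinuousLinearMap.smulRight_apply]
  calc ‖W x • v‖ ≤ ‖W x‖ * ‖v‖ := norm_smul_le _ _
    _ ≤ ‖W‖ * ‖x‖ * ‖v‖ := by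
        have h1 := W.le_opNorm x
        have h0 : (0:ℝ) ≤ ‖v‖ := norm_nonneg _
        nlinarith [norm_nonneg (W x), norm_nonneg x]
    _ = ‖W‖ * ‖v‖ * ‖x‖ := by ring

/-- Second derivative bound for the reciprocal of a shifted elliptic symbol: there is a constant
`C' > 0`, depending only on `c, C₁, C₂` (and `d, δ`), such that whenever
`‖Da(ξ)‖ ≤ C₁⟨ξ⟩^{δ-1}`, `‖D²a(ξ)‖ ≤ C₂⟨ξ⟩^{δ-2}` and `|λ + a(ξ)| ≥ c⟨ξ⟩^δ`, one has
`‖D²[(λ+a)⁻¹](ξ)‖ ≤ C'⟨ξ⟩^{-δ-2}`. -/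
theorem second_deriv_inv_shifted_symbol (d : ℕ) (hd : 1 ≤ d) (δ c C₁ C₂ : ℝ)
    (hδ : 0 < δ) (hc : 0 < c) (hC₁ : 0 < C₁) (hC₂ : 0 < C₂) :
    ∃ C' > 0, ∀ (lam : ℂ) (a : EuclideanSpace ℝ (Fin d) → ℂ),
      ContDiff ℝ 2 a →
      (∀ ξ, ‖fderiv ℝ a ξ‖ ≤ C₁ * (1 + ‖ξ‖ ^ 2) ^ ((δ - 1) / 2)) →
      (∀ ξ, ‖iteratedFDeriv ℝ 2 a ξ‖ ≤ C₂ * (1 + ‖ξ‖ ^ 2) ^ ((δ - 2) / 2)) →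
      (∀ ξ, c * (1 + ‖ξ‖ ^ 2) ^ (δ / 2) ≤ ‖lam + a ξ‖) →
      ∀ ξ, ‖iteratedFDeriv ℝ 2 (fun ξ => (lam + a ξ)⁻¹) ξ‖ ≤
        C' * (1 + ‖ξ‖ ^ 2) ^ ((-δ - 2) / 2) := by
  refine ⟨2 * C₁ ^ 2 / c ^ 3 + C₂ / c ^ 2, by positivity, ?_⟩
  intro lam a ha hDa hD2a hlow ξ₀

  set g : EuclideanSpace ℝ (Fin d) → ℂ := fun ξ => lam + a ξ with hgdef
  have hg : ContDiff ℝ 2 g := contDiff_const.add ha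
  have hgd : Differentiable ℝ g := hg.differentiable (by norm_num)
  have hpos : ∀ ξ : EuclideanSpace ℝ (Fin d), (0:ℝ) < c * (1 + ‖ξ‖ ^ 2) ^ (δ / 2) := by
    intro ξ
    have : (0:ℝ) < 1 + ‖ξ‖ ^ 2 := by positivity
    positivity
  have hne : ∀ ξ : EuclideanSpace ℝ (Fin d), g ξ ≠ 0 := by
    intro ξ h0
    have h1 := hlow ξ
    rw [hgdef] at h0
    simp only [h0] at h1
    simp only [map_zero, norm_zero] at h1
    exact absurd (lt_of_lt_of_le (hpos ξ) h1) (lt_irrefl 0)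
  -- first derivative of the inverse
  set V : EuclideanSpace ℝ (Fin d) → (EuclideanSpace ℝ (Fin d) →L[ℝ] ℂ) := fun x => fderiv ℝ g x with hVdef
  set w : EuclideanSpace ℝ (Fin d) → ℂ := fun x => -(g x * g x)⁻¹ with hwdef
  set F : EuclideanSpace ℝ (Fin d) → (EuclideanSpace ℝ (Fin d) →L[ℝ] ℂ) := fun x => w x • V x with hFdef
  have hinv : ∀ x : EuclideanSpace ℝ (Fin d), HasFDerivAt (fun y => (g y)⁻¹) (F x) x := by
    intro x
    have h1 := ((hasFDerivAt_inv (𝕜 := ℂ) (hne x)).restrictScalars ℝ).comp x (hgd x).hasFDerivAt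
    refine HasFDerivAt.congr_fderiv h1 ?_
    ext v
    simp [hFdef, hwdef, hVdef, pow_two, mul_comm]
  have hfd : fderiv ℝ (fun y : EuclideanSpace ℝ (Fin d) => (g y)⁻¹) = F := funext fun x => (hinv x).fderiv
  -- second derivative data at ξ₀
  have hVcd : ContDiff ℝ 1 V := hg.fderiv_right (by norm_num)
  have hVd : HasFDerivAt V (fderiv ℝ V ξ₀) ξ₀ :=
    ((hVcd.differentiable one_ne_zero) ξ₀).hasFDerivAt
  have hp : HasFDerivAt (fun y : EuclideanSpace ℝ (Fin d) => g y * g y) (g ξ₀ • V ξ₀ + g ξ₀ • V ξ₀) ξ₀ :=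
    (hgd ξ₀).hasFDerivAt.mul (hgd ξ₀).hasFDerivAt
  set z : ℂ := -((g ξ₀ * g ξ₀) ^ 2)⁻¹ with hzdef
  set W : EuclideanSpace ℝ (Fin d) →L[ℝ] ℂ :=
    -(((ContinuousLinearMap.smulRight (1 : ℂ →L[ℂ] ℂ) z).restrictScalars ℝ).comp
      (g ξ₀ • V ξ₀ + g ξ₀ • V ξ₀)) with hWdef
  have hw : HasFDerivAt w W ξ₀ := by
    have h1 := ((hasFDerivAt_inv (𝕜 := ℂ) (mul_ne_zero (hne ξ₀) (hne ξ₀))).restrictScalars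
      ℝ).comp ξ₀ hp
    exact h1.neg
  have hFd : HasFDerivAt F (w ξ₀ • fderiv ℝ V ξ₀ + W.smulRight (V ξ₀)) ξ₀ := hw.smul hVd
  -- reduce the goal to the norm of this derivative
  have hnorm2 : ‖iteratedFDeriv ℝ 2 (fun ξ => (lam + a ξ)⁻¹) ξ₀‖
      = ‖w ξ₀ • fderiv ℝ V ξ₀ + W.smulRight (V ξ₀)‖ := by
    have e1 : ‖iteratedFDeriv ℝ 2 (fun ξ => (lam + a ξ)⁻¹) ξ₀‖
        = ‖iteratedFDeriv ℝ 1 (fderiv ℝ fun y : EuclideanSpace ℝ (Fin d) => (g y)⁻¹) ξ₀‖ :=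
      (norm_iteratedFDeriv_fderiv (n := 1)).symm
    have e2 : ‖iteratedFDeriv ℝ 1 (fderiv ℝ fun y : EuclideanSpace ℝ (Fin d) => (g y)⁻¹) ξ₀‖
        = ‖fderiv ℝ (fderiv ℝ fun y : EuclideanSpace ℝ (Fin d) => (g y)⁻¹) ξ₀‖ := by
      rw [← norm_iteratedFDeriv_fderiv (n := 0), norm_iteratedFDeriv_zero]
    rw [e1, e2, hfd, hFd.fderiv]
  rw [hnorm2]
  -- norms of the pieces
  set t : ℝ := 1 + ‖ξ₀‖ ^ 2 with htdef
  have ht0 : (0:ℝ) < t := by positivity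
  set A : ℝ := ‖g ξ₀‖ with hAdef
  have hA : c * t ^ (δ / 2) ≤ A := hlow ξ₀
  have hA0 : 0 < A := lt_of_lt_of_le (hpos ξ₀) hA
  have hVnorm : ‖V ξ₀‖ ≤ C₁ * t ^ ((δ - 1) / 2) := by
    have : V ξ₀ = fderiv ℝ a ξ₀ := fderiv_const_add _
    rw [this]; exact hDa ξ₀
  have hV'norm : ‖fderiv ℝ V ξ₀‖ ≤ C₂ * t ^ ((δ - 2) / 2) := by
    have hVa : V = fun x => fderiv ℝ a x := funext fun x => fderiv_const_add _
    have e : ‖fderiv ℝ V ξ₀‖ = ‖iteratedFDeriv ℝ 2 a ξ₀‖ := by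
      rw [hVa, ← norm_iteratedFDeriv_zero (𝕜 := ℝ) (f := fderiv ℝ (fun x => fderiv ℝ a x)) (x := ξ₀),
        norm_iteratedFDeriv_fderiv (n := 0), norm_iteratedFDeriv_fderiv (n := 1)]
    rw [e]; exact hD2a ξ₀
  have hwnorm : ‖w ξ₀‖ = (A * A)⁻¹ := by
    simp [hwdef, hAdef, map_mul]
  have hWnorm : ‖W‖ ≤ ((A * A) ^ 2)⁻¹ * (2 * A * ‖V ξ₀‖) := by
    have h1 : ‖W‖ ≤ ‖(ContinuousLinearMap.smulRight (1 : ℂ →L[ℂ] ℂ) z).restrictScalars ℝ‖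
        * ‖g ξ₀ • V ξ₀ + g ξ₀ • V ξ₀‖ := by
      rw [hWdef, norm_neg]
      exact ContinuousLinearMap.opNorm_comp_le _ _
    have h2 : ‖(ContinuousLinearMap.smulRight (1 : ℂ →L[ℂ] ℂ) z).restrictScalars ℝ‖
        = ((A * A) ^ 2)⁻¹ := by
      rw [ContinuousLinearMap.norm_restrictScalars, ContinuousLinearMap.norm_smulRight_apply]
      simp [hzdef, hAdef, map_pow, map_mul, norm_one]
    have h3 : ‖g ξ₀ • V ξ₀ + g ξ₀ • V ξ₀‖ ≤ 2 * A * ‖V ξ₀‖ := by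
      have h4 := norm_add_le (g ξ₀ • V ξ₀) (g ξ₀ • V ξ₀)
      have h5 : ‖g ξ₀ • V ξ₀‖ ≤ A * ‖V ξ₀‖ := by
        have := norm_smul_le (g ξ₀) (V ξ₀)
        have hg0 : ‖g ξ₀‖ = A := rfl
        rw [hg0] at this
        exact this
      calc ‖g ξ₀ • V ξ₀ + g ξ₀ • V ξ₀‖ ≤ ‖g ξ₀ • V ξ₀‖ + ‖g ξ₀ • V ξ₀‖ := h4
        _ ≤ A * ‖V ξ₀‖ + A * ‖V ξ₀‖ := add_le_add h5 h5
        _ = 2 * A * ‖V ξ₀‖ := by ring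
    calc ‖W‖ ≤ ‖(ContinuousLinearMap.smulRight (1 : ℂ →L[ℂ] ℂ) z).restrictScalars ℝ‖
        * ‖g ξ₀ • V ξ₀ + g ξ₀ • V ξ₀‖ := h1
      _ ≤ ((A * A) ^ 2)⁻¹ * (2 * A * ‖V ξ₀‖) := by
          rw [h2]
          exact mul_le_mul_of_nonneg_left h3 (by positivity)
  -- combine
  have hB : A⁻¹ ≤ c⁻¹ * t ^ (-(δ / 2)) := by
    have h1 : A⁻¹ ≤ (c * t ^ (δ / 2))⁻¹ := by
      exact inv_anti₀ (hpos ξ₀) hA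
    rw [mul_inv, ← Real.rpow_neg ht0.le] at h1
    exact h1
  have hmain : ‖w ξ₀ • fderiv ℝ V ξ₀ + W.smulRight (V ξ₀)‖
      ≤ (A⁻¹) ^ 2 * (C₂ * t ^ ((δ - 2) / 2)) + 2 * (A⁻¹) ^ 3 * (C₁ * t ^ ((δ - 1) / 2)) ^ 2 := by
    have h1 : ‖w ξ₀ • fderiv ℝ V ξ₀ + W.smulRight (V ξ₀)‖
        ≤ ‖w ξ₀‖ * ‖fderiv ℝ V ξ₀‖ + ‖W‖ * ‖V ξ₀‖ := by
      refine (norm_add_le (w ξ₀ • fderiv ℝ V ξ₀) (W.smulRight (V ξ₀))).trans ?_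
      have hs : ‖w ξ₀ • fderiv ℝ V ξ₀‖ ≤ ‖w ξ₀‖ * ‖fderiv ℝ V ξ₀‖ := by
        refine ContinuousLinearMap.opNorm_le_bound _ (by positivity) fun x => ?_
        refine ContinuousLinearMap.opNorm_le_bound _ (by positivity) fun y => ?_
        rw [ContinuousLinearMap.smul_apply, ContinuousLinearMap.smul_apply, smul_eq_mul, norm_mul]
        exact (mul_le_mul_of_nonneg_left ((fderiv ℝ V ξ₀).le_opNorm₂ x y) (norm_nonneg _)).trans_eq (by ring)
      exact add_le_add hs (aux_norm_smulRight W (V ξ₀))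
    refine h1.trans ?_
    have hVn0 : (0:ℝ) ≤ ‖V ξ₀‖ := norm_nonneg _
    have t1 : ‖w ξ₀‖ * ‖fderiv ℝ V ξ₀‖ ≤ (A⁻¹) ^ 2 * (C₂ * t ^ ((δ - 2) / 2)) := by
      rw [hwnorm]
      have : (A * A)⁻¹ = (A⁻¹) ^ 2 := by field_simp
      rw [this]
      exact mul_le_mul_of_nonneg_left hV'norm (by positivity)
    have t2 : ‖W‖ * ‖V ξ₀‖ ≤ 2 * (A⁻¹) ^ 3 * (C₁ * t ^ ((δ - 1) / 2)) ^ 2 := by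
      have step : ‖W‖ * ‖V ξ₀‖ ≤ ((A * A) ^ 2)⁻¹ * (2 * A * ‖V ξ₀‖) * ‖V ξ₀‖ :=
        mul_le_mul_of_nonneg_right hWnorm hVn0
      refine step.trans ?_
      have e : ((A * A) ^ 2)⁻¹ * (2 * A * ‖V ξ₀‖) * ‖V ξ₀‖ = 2 * (A⁻¹) ^ 3 * ‖V ξ₀‖ ^ 2 := by
        field_simp
      rw [e]
      refine mul_le_mul_of_nonneg_left ?_ (by positivity)
      exact pow_le_pow_left₀ hVn0 hVnorm 2
    linarith
  have hk : ∀ (p : ℝ) (n : ℕ), (t ^ p) ^ n = t ^ ((n : ℝ) * p) := by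
    intro p n
    rw [← Real.rpow_natCast (t ^ p) n, ← Real.rpow_mul ht0.le, mul_comm]
  have hb1 : (A⁻¹) ^ 2 * (C₂ * t ^ ((δ - 2) / 2))
      ≤ (c⁻¹ * t ^ (-(δ / 2))) ^ 2 * (C₂ * t ^ ((δ - 2) / 2)) := by
    refine mul_le_mul_of_nonneg_right ?_ (by positivity)
    exact pow_le_pow_left₀ (by positivity) hB 2
  have hb2 : 2 * (A⁻¹) ^ 3 * (C₁ * t ^ ((δ - 1) / 2)) ^ 2
      ≤ 2 * (c⁻¹ * t ^ (-(δ / 2))) ^ 3 * (C₁ * t ^ ((δ - 1) / 2)) ^ 2 := by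
    refine mul_le_mul_of_nonneg_right ?_ (by positivity)
    refine mul_le_mul_of_nonneg_left ?_ (by norm_num)
    exact pow_le_pow_left₀ (by positivity) hB 3
  have e2 : (t ^ (-(δ / 2))) ^ 2 * t ^ ((δ - 2) / 2) = t ^ ((-δ - 2) / 2) := by
    rw [hk, ← Real.rpow_add ht0]
    congr 1
    ring
  have e3 : (t ^ (-(δ / 2))) ^ 3 * (t ^ ((δ - 1) / 2)) ^ 2 = t ^ ((-δ - 2) / 2) := by
    rw [hk, hk, ← Real.rpow_add ht0]
    congr 1
    ring
  calc ‖w ξ₀ • fderiv ℝ V ξ₀ + W.smulRight (V ξ₀)‖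
      ≤ (A⁻¹) ^ 2 * (C₂ * t ^ ((δ - 2) / 2)) + 2 * (A⁻¹) ^ 3 * (C₁ * t ^ ((δ - 1) / 2)) ^ 2 :=
        hmain
    _ ≤ (c⁻¹ * t ^ (-(δ / 2))) ^ 2 * (C₂ * t ^ ((δ - 2) / 2))
        + 2 * (c⁻¹ * t ^ (-(δ / 2))) ^ 3 * (C₁ * t ^ ((δ - 1) / 2)) ^ 2 := add_le_add hb1 hb2
    _ = (C₂ / c ^ 2) * ((t ^ (-(δ / 2))) ^ 2 * t ^ ((δ - 2) / 2))
        + (2 * C₁ ^ 2 / c ^ 3) * ((t ^ (-(δ / 2))) ^ 3 * (t ^ ((δ - 1) / 2)) ^ 2) := by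
        field_simp
    _ = (2 * C₁ ^ 2 / c ^ 3 + C₂ / c ^ 2) * t ^ ((-δ - 2) / 2) := by
        rw [e2, e3]
        ring
end

section
/- Hypoelliptic bound for all derivatives of the reciprocal of a shifted elliptic symbol: Let d ≥ 1, n ∈ ℕ, δ > 0, c > 0, C > 0 and λ ∈ ℂ. Let a : ℝ^d → ℂ be n times continuously differentiable with ‖iteratedFDeriv k a (ξ)‖ ≤ C·⟨ξ⟩^{δ-k} for all 1 ≤ k ≤ n and all ξ ∈ ℝ^d, and suppose |λ + a(ξ)| ≥ c·⟨ξ⟩^δ for all ξ ∈ ℝ^d. Then there exists a constant C' > 0 depending only on n, d, c and C such that ‖iteratedFDeriv n (fun ξ => (λ + a(ξ))⁻¹) (ξ)‖ ≤ C'·⟨ξ⟩^{-δ-n} for all ξ ∈ ℝ^d. -/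
open Real Complex

private lemma rpow_combine {t : ℝ} (ht : 0 < t) {x y z : ℝ} (h : x + y = z) :
    t ^ x * t ^ y = t ^ z := by rw [← Real.rpow_add ht, h]

private lemma hypo_aux (d n : ℕ) (δ c C : ℝ)
    (hδ : 0 < δ) (hc : 0 < c) (hC : 0 < C) :
    ∀ m : ℕ, ∃ K > 0, ∀ (lam : ℂ) (a : EuclideanSpace ℝ (Fin d) → ℂ),
      ContDiff ℝ n a →
      (∀ k : ℕ, 1 ≤ k → k ≤ n → ∀ ξ,
        ‖iteratedFDeriv ℝ k a ξ‖ ≤ C * (1 + ‖ξ‖ ^ 2) ^ ((δ - (k : ℝ)) / 2)) →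
      (∀ ξ, c * (1 + ‖ξ‖ ^ 2) ^ (δ / 2) ≤ ‖lam + a ξ‖) →
      ∀ i, i ≤ m → i ≤ n → ∀ ξ,
        ‖iteratedFDeriv ℝ i (fun ξ => (lam + a ξ)⁻¹) ξ‖ ≤
          K * (1 + ‖ξ‖ ^ 2) ^ ((-δ - (i : ℝ)) / 2) := by
  intro m
  induction m with
  | zero =>
    refine ⟨c⁻¹, by positivity, ?_⟩
    intro lam a ha hder hell i hi _ ξ
    interval_cases i
    have ht : (0:ℝ) < 1 + ‖ξ‖ ^ 2 := by positivity
    have htp : (0:ℝ) < (1 + ‖ξ‖ ^ 2) ^ (δ / 2) := Real.rpow_pos_of_pos ht _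
    rw [norm_iteratedFDeriv_zero, norm_inv]
    have h1 : c * (1 + ‖ξ‖ ^ 2) ^ (δ / 2) ≤ ‖lam + a ξ‖ := by
      exact hell ξ
    have h2 : ‖lam + a ξ‖⁻¹ ≤ (c * (1 + ‖ξ‖ ^ 2) ^ (δ / 2))⁻¹ :=
      inv_anti₀ (by positivity) h1
    refine h2.trans_eq ?_
    rw [mul_inv, ← Real.rpow_neg ht.le]
    congr 1
    push_cast
    ring
  | succ m IHm =>
    obtain ⟨K, hK, IH⟩ := IHm
    refine ⟨K + (2:ℝ) ^ m * ((2:ℝ) ^ m * K ^ 2) * C, by positivity, ?_⟩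
    intro lam a ha hder hell i hi hin ξ
    have ht : (0:ℝ) < 1 + ‖ξ‖ ^ 2 := by positivity
    have hpow : (0:ℝ) < (1 + ‖ξ‖ ^ 2) ^ ((-δ - (i : ℝ)) / 2) := Real.rpow_pos_of_pos ht _
    rcases Nat.lt_succ_iff_lt_or_eq.mp (Nat.lt_succ_of_le hi) with h | rfl
    · -- i ≤ m : use IH directly
      have := IH lam a ha hder hell i (Nat.lt_succ_iff.mp h) hin ξ
      refine this.trans ?_
      have h0 : (0:ℝ) ≤ (2:ℝ) ^ m * ((2:ℝ) ^ m * K ^ 2) * C := by positivity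
      have : K ≤ K + (2:ℝ) ^ m * ((2:ℝ) ^ m * K ^ 2) * C := le_add_of_nonneg_right h0
      exact mul_le_mul_of_nonneg_right this hpow.le
    · -- i = m + 1
      have hz : ∀ x, lam + a x ≠ 0 := by
        intro x hx
        have := hell x
        rw [hx] at this
        simp only [norm_zero] at this
        have : (0:ℝ) < c * (1 + ‖x‖ ^ 2) ^ (δ / 2) := by positivity
        linarith
      have hn1 : (1:ℕ) ≤ n := le_trans (Nat.succ_le_succ (Nat.zero_le m)) hin
      set g : EuclideanSpace ℝ (Fin d) → ℂ := fun ξ => (lam + a ξ)⁻¹ with hgdef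
      have hgc : ContDiff ℝ n g := (contDiff_const.add ha).inv hz
      -- inductive bound for derivatives of g up to order m
      have hIH : ∀ j, j ≤ m → ∀ x, ‖iteratedFDeriv ℝ j g x‖ ≤
          K * (1 + ‖x‖ ^ 2) ^ ((-δ - (j : ℝ)) / 2) := by
        intro j hj x
        exact IH lam a ha hder hell j hj (le_trans (le_trans hj (Nat.le_succ m)) hin) x
      -- the function u = -g * g
      set u : EuclideanSpace ℝ (Fin d) → ℂ := fun ξ => (-(lam + a ξ)⁻¹) * (lam + a ξ)⁻¹
        with hudef
      -- bound on derivatives of u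
      have hu : ∀ j, j ≤ m → ∀ x, ‖iteratedFDeriv ℝ j u x‖ ≤
          (2:ℝ) ^ m * K ^ 2 * (1 + ‖x‖ ^ 2) ^ ((-(2*δ) - (j : ℝ)) / 2) := by
        intro j hj x
        have htx : (0:ℝ) < 1 + ‖x‖ ^ 2 := by positivity
        have hjn : (j : WithTop ℕ∞) ≤ (n : WithTop ℕ∞) := by
          exact_mod_cast le_trans (le_trans hj (Nat.le_succ m)) hin
        have hmul := norm_iteratedFDeriv_mul_le (f := fun ξ => -(lam + a ξ)⁻¹)
          (g := g) (N := (n : WithTop ℕ∞)) hgc.neg hgc x hjn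
        refine hmul.trans ?_
        have hterm : ∀ l ∈ Finset.range (j + 1),
            (j.choose l : ℝ) * ‖iteratedFDeriv ℝ l (fun ξ => -(lam + a ξ)⁻¹) x‖ *
              ‖iteratedFDeriv ℝ (j - l) g x‖ ≤
            (j.choose l : ℝ) * (K ^ 2 * (1 + ‖x‖ ^ 2) ^ ((-(2*δ) - (j : ℝ)) / 2)) := by
          intro l hl
          have hlj : l ≤ j := Nat.lt_succ_iff.mp (Finset.mem_range.mp hl)
          have hnegeq : ‖iteratedFDeriv ℝ l (fun ξ => -(lam + a ξ)⁻¹) x‖ =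
              ‖iteratedFDeriv ℝ l g x‖ := by
            rw [show (fun ξ => -(lam + a ξ)⁻¹) = -g from rfl, iteratedFDeriv_neg_apply,
              norm_neg]
          rw [hnegeq]
          have h1 := hIH l (le_trans hlj hj) x
          have h2 := hIH (j - l) (le_trans (Nat.sub_le j l) hj) x
          have hcomb : (K * (1 + ‖x‖ ^ 2) ^ ((-δ - (l : ℝ)) / 2)) *
              (K * (1 + ‖x‖ ^ 2) ^ ((-δ - ((j - l : ℕ) : ℝ)) / 2)) =
              K ^ 2 * (1 + ‖x‖ ^ 2) ^ ((-(2*δ) - (j : ℝ)) / 2) := by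
            have hcast : ((j - l : ℕ) : ℝ) = (j : ℝ) - (l : ℝ) := Nat.cast_sub hlj
            rw [mul_mul_mul_comm, ← sq, ← Real.rpow_add htx]
            congr 1
            rw [hcast]; ring
          have hb : ‖iteratedFDeriv ℝ l g x‖ * ‖iteratedFDeriv ℝ (j - l) g x‖ ≤
              K ^ 2 * (1 + ‖x‖ ^ 2) ^ ((-(2*δ) - (j : ℝ)) / 2) := by
            rw [← hcomb]
            exact mul_le_mul h1 h2 (norm_nonneg _) (by positivity)
          rw [mul_assoc]
          exact mul_le_mul_of_nonneg_left hb (by positivity)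
        refine (Finset.sum_le_sum hterm).trans ?_
        rw [← Finset.sum_mul]
        have hsum : (∑ l ∈ Finset.range (j + 1), (j.choose l : ℝ)) = 2 ^ j := by
          exact_mod_cast Nat.sum_range_choose j
        rw [hsum, ← mul_assoc]
        have : ((2:ℝ) ^ j) * K ^ 2 ≤ (2:ℝ) ^ m * K ^ 2 := by
          have := pow_le_pow_right₀ (by norm_num : (1:ℝ) ≤ 2) hj
          nlinarith
        exact mul_le_mul_of_nonneg_right this (by positivity)
      -- fderiv of g
      have hdiffa : Differentiable ℝ a := ha.differentiable (by exact_mod_cast (show n ≠ 0 by omega))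
      have hfd : fderiv ℝ g = fun x => u x • fderiv ℝ a x := by
        funext x
        have hF : HasFDerivAt (fun ξ => lam + a ξ) (fderiv ℝ a x) x :=
          (hdiffa x).hasFDerivAt.const_add lam
        have h1 : HasFDerivAt g
            ((-ContinuousLinearMap.mulLeftRight ℝ ℂ (lam + a x)⁻¹ (lam + a x)⁻¹).comp
              (fderiv ℝ a x)) x :=
          (hasFDerivAt_inv' (hz x)).comp x hF
        rw [h1.fderiv]
        ext v
        simp only [ContinuousLinearMap.coe_comp', Function.comp_apply,
          ContinuousLinearMap.neg_apply, ContinuousLinearMap.mulLeftRight_apply,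
          ContinuousLinearMap.smul_apply, hudef, smul_eq_mul]
        ring
      -- the main estimate
      have hnorm : ‖iteratedFDeriv ℝ (m + 1) g ξ‖ =
          ‖iteratedFDeriv ℝ m (fun x => u x • fderiv ℝ a x) ξ‖ := by
        rw [← norm_iteratedFDeriv_fderiv, hfd]
      rw [hnorm]
      have huc : ContDiff ℝ (m : WithTop ℕ∞) u := by
        have : ContDiff ℝ n u := hgc.neg.mul hgc
        exact this.of_le (by exact_mod_cast le_trans (Nat.le_succ m) hin)
      have hfc : ContDiff ℝ (m : WithTop ℕ∞) (fderiv ℝ a) := by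
        refine ha.fderiv_right ?_
        exact_mod_cast hin
      have hsmul := norm_iteratedFDeriv_smul_le (f := u) (g := fderiv ℝ a)
        (N := (m : WithTop ℕ∞)) huc hfc ξ (le_refl _)
      refine hsmul.trans ?_
      have hterm : ∀ l ∈ Finset.range (m + 1),
          (m.choose l : ℝ) * ‖iteratedFDeriv ℝ l u ξ‖ *
            ‖iteratedFDeriv ℝ (m - l) (fderiv ℝ a) ξ‖ ≤
          (m.choose l : ℝ) * ((2:ℝ) ^ m * K ^ 2 * C *
            (1 + ‖ξ‖ ^ 2) ^ ((-δ - ((m : ℝ) + 1)) / 2)) := by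
        intro l hl
        have hlm : l ≤ m := Nat.lt_succ_iff.mp (Finset.mem_range.mp hl)
        have h1 := hu l hlm ξ
        have h2 : ‖iteratedFDeriv ℝ (m - l) (fderiv ℝ a) ξ‖ ≤
            C * (1 + ‖ξ‖ ^ 2) ^ ((δ - ((m - l : ℕ) + 1 : ℝ)) / 2) := by
          rw [norm_iteratedFDeriv_fderiv]
          have := hder (m - l + 1) (Nat.succ_le_succ (Nat.zero_le _))
            (by omega) ξ
          refine this.trans_eq ?_
          congr 2
          push_cast
          ring
        have hcomb : ((2:ℝ) ^ m * K ^ 2 * (1 + ‖ξ‖ ^ 2) ^ ((-(2*δ) - (l : ℝ)) / 2)) *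
            (C * (1 + ‖ξ‖ ^ 2) ^ ((δ - ((m - l : ℕ) + 1 : ℝ)) / 2)) =
            (2:ℝ) ^ m * K ^ 2 * C * (1 + ‖ξ‖ ^ 2) ^ ((-δ - ((m : ℝ) + 1)) / 2) := by
          have hcast : ((m - l : ℕ) : ℝ) = (m : ℝ) - (l : ℝ) := Nat.cast_sub hlm
          rw [mul_mul_mul_comm, ← Real.rpow_add ht]
          congr 1
          rw [hcast]; ring
        have hb : ‖iteratedFDeriv ℝ l u ξ‖ * ‖iteratedFDeriv ℝ (m - l) (fderiv ℝ a) ξ‖ ≤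
            (2:ℝ) ^ m * K ^ 2 * C * (1 + ‖ξ‖ ^ 2) ^ ((-δ - ((m : ℝ) + 1)) / 2) := by
          rw [← hcomb]
          exact mul_le_mul h1 h2 (norm_nonneg _) (by positivity)
        rw [mul_assoc]
        exact mul_le_mul_of_nonneg_left hb (by positivity)
      refine (Finset.sum_le_sum hterm).trans ?_
      rw [← Finset.sum_mul]
      have hsum : (∑ l ∈ Finset.range (m + 1), (m.choose l : ℝ)) = 2 ^ m := by
        exact_mod_cast Nat.sum_range_choose m
      rw [hsum]
      have hexp : ((-δ - ((m : ℝ) + 1)) / 2) = ((-δ - ((m + 1 : ℕ) : ℝ)) / 2) := by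
        push_cast
        ring
      rw [hexp]
      have hpos : (0:ℝ) < (1 + ‖ξ‖ ^ 2) ^ ((-δ - ((m + 1 : ℕ) : ℝ)) / 2) :=
        Real.rpow_pos_of_pos ht _
      have hKpos : (0:ℝ) ≤ K := hK.le
      have : (2:ℝ) ^ m * ((2:ℝ) ^ m * K ^ 2 * C *
          (1 + ‖ξ‖ ^ 2) ^ ((-δ - ((m + 1 : ℕ) : ℝ)) / 2)) ≤
          (K + (2:ℝ) ^ m * ((2:ℝ) ^ m * K ^ 2) * C) *
          (1 + ‖ξ‖ ^ 2) ^ ((-δ - ((m + 1 : ℕ) : ℝ)) / 2) := by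
        rw [← mul_assoc]
        refine mul_le_mul_of_nonneg_right ?_ hpos.le
        nlinarith [hK]
      linarith [this]

/-- Hypoelliptic bound for all derivatives of the reciprocal of a shifted elliptic symbol:
there is a constant `C' > 0`, depending only on `n, d, c, C` (and `δ`), such that whenever
`‖D^k a(ξ)‖ ≤ C⟨ξ⟩^{δ-k}` for `1 ≤ k ≤ n` and `|λ + a(ξ)| ≥ c⟨ξ⟩^δ`, one has
`‖D^n[(λ+a)⁻¹](ξ)‖ ≤ C'⟨ξ⟩^{-δ-n}`. -/
theorem hypoelliptic_inv_bound (d n : ℕ) (hd : 1 ≤ d) (δ c C : ℝ)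
    (hδ : 0 < δ) (hc : 0 < c) (hC : 0 < C) :
    ∃ C' > 0, ∀ (lam : ℂ) (a : EuclideanSpace ℝ (Fin d) → ℂ),
      ContDiff ℝ n a →
      (∀ k : ℕ, 1 ≤ k → k ≤ n → ∀ ξ,
        ‖iteratedFDeriv ℝ k a ξ‖ ≤ C * (1 + ‖ξ‖ ^ 2) ^ ((δ - (k : ℝ)) / 2)) →
      (∀ ξ, c * (1 + ‖ξ‖ ^ 2) ^ (δ / 2) ≤ ‖lam + a ξ‖) →
      ∀ ξ, ‖iteratedFDeriv ℝ n (fun ξ => (lam + a ξ)⁻¹) ξ‖ ≤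
        C' * (1 + ‖ξ‖ ^ 2) ^ ((-δ - (n : ℝ)) / 2) := by
  obtain ⟨K, hK, hbound⟩ := hypo_aux d n δ c C hδ hc hC n
  exact ⟨K, hK, fun lam a ha hder hell ξ =>
    hbound lam a ha hder hell n (le_refl n) (le_refl n) ξ⟩
end

section
/- λ-weighted derivative bound: Let d ≥ 1, δ ∈ (0,2], c₀ > 0, c ≥ 0 and θ ∈ (0, π/2) with c·tan θ < 1, and C₁ > 0. Let a : ℝ^d → ℂ be differentiable with Re a(ξ) ≥ c₀·⟨ξ⟩^δ, |Im a(ξ)| ≤ c·Re a(ξ), and ‖fderiv a (ξ)‖ ≤ C₁·⟨ξ⟩^{δ-1} for all ξ ∈ ℝ^d. Then there exists C > 0 such that for every λ ∈ ℂ with |arg λ| ≤ π/2 + θ and every ξ ∈ ℝ^d, |λ|·‖fderiv (fun ξ => (λ + a(ξ))⁻¹) (ξ)‖ ≤ C·⟨ξ⟩^{-1}. -/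
open Real Complex

/-- Sector separation: if `lam` lies in the sector `Re lam ≥ -t·|Im lam|` and `z = x + iy`
with `x > 0`, `|y| ≤ c·x`, and `c·t < 1`, then `|lam + z| ≳ |lam| + x`. -/
lemma sector_lower (t c : ℝ) (ht : 0 < t) (hc : 0 ≤ c) (hct : c * t < 1) :
    ∃ ε > 0, ∀ l1 l2 x y : ℝ, 0 < x → |y| ≤ c * x → -t * |l2| ≤ l1 →
      ε * (Real.sqrt (l1 ^ 2 + l2 ^ 2) + x) ≤ Real.sqrt ((l1 + x) ^ 2 + (l2 + y) ^ 2) := by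
  set p : ℝ := (c + 1 / t) / 2 with hp_def
  have hpc : c < p := by
    have : c < 1 / t := (lt_div_iff₀ ht).2 (by linarith)
    simp only [hp_def]; linarith
  have hp : 0 < p := lt_of_le_of_lt hc hpc
  have hpt : p * t < 1 := by
    have h1t : (1 / t) * t = 1 := by field_simp
    simp only [hp_def]; nlinarith
  set κ : ℝ := min (min p 1) (min ((1 - p * t) / (1 + t)) (p - c)) with hκ_def
  have hκ : 0 < κ := by
    apply lt_min (lt_min hp one_pos) (lt_min _ (by linarith))
    exact div_pos (by linarith) (by linarith)
  have hsq : 0 < Real.sqrt (p ^ 2 + 1) := Real.sqrt_pos.2 (by positivity)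
  refine ⟨κ / Real.sqrt (p ^ 2 + 1), by positivity, ?_⟩
  intro l1 l2 x y hx hy hl
  set s : ℝ := if 0 ≤ l2 then 1 else -1 with hs_def
  have hs1 : s = 1 ∨ s = -1 := by
    simp only [hs_def]; split; exacts [Or.inl rfl, Or.inr rfl]
  have hsl2 : s * l2 = |l2| := by
    simp only [hs_def]; split
    · rw [one_mul, _root_.abs_of_nonneg ‹_›]
    · rw [neg_one_mul, _root_.abs_of_neg (lt_of_not_ge ‹_›)]
  have hsabs : |s| = 1 := by rcases hs1 with h | h <;> rw [h] <;> norm_num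
  have hsy : -(c * x) ≤ s * y := by
    have h1 : |s * y| ≤ c * x := by rw [abs_mul, hsabs, one_mul]; exact hy
    linarith [neg_abs_le (s * y)]
  have hR0 : 0 ≤ Real.sqrt ((l1 + x) ^ 2 + (l2 + y) ^ 2) := Real.sqrt_nonneg _
  have hF_le : p * (l1 + x) + s * (l2 + y) ≤
      Real.sqrt (p ^ 2 + 1) * Real.sqrt ((l1 + x) ^ 2 + (l2 + y) ^ 2) := by
    have h2 : (p * (l1 + x) + s * (l2 + y)) ^ 2 ≤
        (p ^ 2 + 1) * ((l1 + x) ^ 2 + (l2 + y) ^ 2) := by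
      rcases hs1 with h | h <;> rw [h] <;>
        nlinarith [sq_nonneg (p * (l2 + y) - (l1 + x)), sq_nonneg (p * (l2 + y) + (l1 + x))]
    calc p * (l1 + x) + s * (l2 + y) ≤ |p * (l1 + x) + s * (l2 + y)| := le_abs_self _
      _ = Real.sqrt ((p * (l1 + x) + s * (l2 + y)) ^ 2) := (Real.sqrt_sq_eq_abs _).symm
      _ ≤ Real.sqrt ((p ^ 2 + 1) * ((l1 + x) ^ 2 + (l2 + y) ^ 2)) := Real.sqrt_le_sqrt h2
      _ = _ := by rw [Real.sqrt_mul (by positivity)]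
  have habs : Real.sqrt (l1 ^ 2 + l2 ^ 2) ≤ |l1| + |l2| := by
    calc Real.sqrt (l1 ^ 2 + l2 ^ 2) ≤ Real.sqrt ((|l1| + |l2|) ^ 2) := by
          apply Real.sqrt_le_sqrt
          nlinarith [_root_.sq_abs l1, _root_.sq_abs l2,
            mul_nonneg (_root_.abs_nonneg l1) (_root_.abs_nonneg l2)]
      _ = |l1| + |l2| := Real.sqrt_sq (by positivity)
  have hκp : κ ≤ p := le_trans (min_le_left _ _) (min_le_left _ _)
  have hκ1 : κ ≤ 1 := le_trans (min_le_left _ _) (min_le_right _ _)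
  have hκt : κ ≤ (1 - p * t) / (1 + t) := le_trans (min_le_right _ _) (min_le_left _ _)
  have hκc : κ ≤ p - c := le_trans (min_le_right _ _) (min_le_right _ _)
  have hlow : κ * (Real.sqrt (l1 ^ 2 + l2 ^ 2) + x) ≤ p * (l1 + x) + s * (l2 + y) := by
    have hF_eq : p * (l1 + x) + s * (l2 + y) = p * l1 + |l2| + (p * x + s * y) := by
      rw [← hsl2]; ring
    rw [hF_eq]
    have h4 : κ * x ≤ (p - c) * x := mul_le_mul_of_nonneg_right hκc hx.le
    rcases le_or_gt 0 l1 with h1 | h1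
    · have hS : Real.sqrt (l1 ^ 2 + l2 ^ 2) ≤ l1 + |l2| := by
        rwa [_root_.abs_of_nonneg h1] at habs
      have hA := mul_le_mul_of_nonneg_left hS hκ.le
      have hB := mul_le_mul_of_nonneg_right hκp h1
      have hC := mul_le_mul_of_nonneg_right hκ1 (_root_.abs_nonneg l2)
      linarith
    · have hS : Real.sqrt (l1 ^ 2 + l2 ^ 2) ≤ (1 + t) * |l2| := by
        have : |l1| ≤ t * |l2| := by rw [_root_.abs_of_neg h1]; linarith
        linarith
      have hκl : κ * (1 + t) ≤ 1 - p * t := (le_div_iff₀ (by linarith)).1 hκt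
      have hA := mul_le_mul_of_nonneg_left hS hκ.le
      have hB := mul_le_mul_of_nonneg_right hκl (_root_.abs_nonneg l2)
      have hC := mul_le_mul_of_nonneg_left hl hp.le
      linarith
  calc κ / Real.sqrt (p ^ 2 + 1) * (Real.sqrt (l1 ^ 2 + l2 ^ 2) + x)
      = κ * (Real.sqrt (l1 ^ 2 + l2 ^ 2) + x) / Real.sqrt (p ^ 2 + 1) := by ring
    _ ≤ (p * (l1 + x) + s * (l2 + y)) / Real.sqrt (p ^ 2 + 1) := by gcongr
    _ ≤ Real.sqrt ((l1 + x) ^ 2 + (l2 + y) ^ 2) := by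
        rw [div_le_iff₀ hsq]; linarith [hF_le]

/-- The sector condition `|arg lam| ≤ π/2 + θ` implies `Re lam ≥ -tan θ · |Im lam|`. -/
lemma arg_sector {θ : ℝ} (hθ0 : 0 < θ) (hθπ : θ < π / 2) {lam : ℂ} (h0 : lam ≠ 0)
    (h : |lam.arg| ≤ π / 2 + θ) : -Real.tan θ * |lam.im| ≤ lam.re := by
  have hr : 0 < ‖lam‖ := norm_pos_iff.mpr h0
  have hre : lam.re = ‖lam‖ * Real.cos lam.arg := (Complex.norm_mul_cos_arg lam).symm
  have him : lam.im = ‖lam‖ * Real.sin lam.arg := (Complex.norm_mul_sin_arg lam).symm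
  set φ := lam.arg with hφ_def
  have hφπ : φ ≤ π := Complex.arg_le_pi lam
  have hφπ' : -π < φ := Complex.neg_pi_lt_arg lam
  have hcosθ : 0 < Real.cos θ := Real.cos_pos_of_mem_Ioo ⟨by linarith, hθπ⟩
  have habs_sin : |Real.sin φ| = Real.sin |φ| := by
    rcases le_or_gt 0 φ with h' | h'
    · rw [_root_.abs_of_nonneg h',
        _root_.abs_of_nonneg (Real.sin_nonneg_of_nonneg_of_le_pi h' hφπ)]
    · rw [_root_.abs_of_neg h', Real.sin_neg,
        _root_.abs_of_nonpos (Real.sin_nonpos_of_nonpos_of_neg_pi_le h'.le hφπ'.le)]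
  have hcos_abs : Real.cos φ = Real.cos |φ| := (Real.cos_abs φ).symm
  have hkey : 0 ≤ Real.cos (|φ| - θ) := by
    apply Real.cos_nonneg_of_mem_Icc
    constructor
    · have := _root_.abs_nonneg φ; linarith
    · linarith [h]
  rw [Real.cos_sub] at hkey
  have hmain : 0 ≤ Real.cos θ * lam.re + Real.sin θ * |lam.im| := by
    have him_abs : |lam.im| = ‖lam‖ * Real.sin |φ| := by
      rw [him, abs_mul, _root_.abs_of_nonneg hr.le, habs_sin]
    rw [hre, him_abs, hcos_abs]
    have : Real.cos θ * (‖lam‖ * Real.cos |φ|) +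
        Real.sin θ * (‖lam‖ * Real.sin |φ|) =
        ‖lam‖ * (Real.cos |φ| * Real.cos θ + Real.sin |φ| * Real.sin θ) := by ring
    rw [this]
    exact mul_nonneg hr.le hkey
  have htan : Real.tan θ * Real.cos θ = Real.sin θ := by
    rw [Real.tan_eq_sin_div_cos]; field_simp
  nlinarith [hmain, htan, hcosθ, _root_.abs_nonneg lam.im]

/-- λ-weighted derivative bound: under ellipticity, the sector condition with `c·tan θ < 1`, and
the first-derivative bound `‖Da(ξ)‖ ≤ C₁⟨ξ⟩^{δ-1}`, there is `C > 0` such that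
`|λ|·‖D[(λ+a)⁻¹](ξ)‖ ≤ C⟨ξ⟩^{-1}` for every `λ` in the sector `|arg λ| ≤ π/2 + θ`. -/
theorem lambda_weighted_deriv_bound (d : ℕ) (hd : 1 ≤ d)
    (δ c₀ c θ C₁ : ℝ) (hδ : δ ∈ Set.Ioc 0 2) (hc₀ : 0 < c₀) (hc : 0 ≤ c)
    (hθ : θ ∈ Set.Ioo 0 (π / 2)) (hcθ : c * Real.tan θ < 1) (hC₁ : 0 < C₁)
    (a : EuclideanSpace ℝ (Fin d) → ℂ) (ha : Differentiable ℝ a)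
    (hell : ∀ ξ, c₀ * (1 + ‖ξ‖ ^ 2) ^ (δ / 2) ≤ (a ξ).re)
    (hsec : ∀ ξ, |(a ξ).im| ≤ c * (a ξ).re)
    (hda : ∀ ξ, ‖fderiv ℝ a ξ‖ ≤ C₁ * (1 + ‖ξ‖ ^ 2) ^ ((δ - 1) / 2)) :
    ∃ C > 0, ∀ lam : ℂ, |lam.arg| ≤ π / 2 + θ → ∀ ξ,
      ‖lam‖ * ‖fderiv ℝ (fun ξ => (lam + a ξ)⁻¹) ξ‖ ≤
        C * (1 + ‖ξ‖ ^ 2) ^ ((-1 : ℝ) / 2) := by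
  obtain ⟨hδ0, hδ2⟩ := hδ
  obtain ⟨hθ0, hθπ⟩ := hθ
  have ht : 0 < Real.tan θ := Real.tan_pos_of_pos_of_lt_pi_div_two hθ0 hθπ
  obtain ⟨ε, hε, hkey⟩ := sector_lower (Real.tan θ) c ht hc hcθ
  refine ⟨C₁ / (4 * ε ^ 2 * c₀), by positivity, ?_⟩
  intro lam hlam ξ
  have hX0 : (0:ℝ) < 1 + ‖ξ‖ ^ 2 := by positivity
  have hx : 0 < (a ξ).re := lt_of_lt_of_le (by positivity) (hell ξ)
  by_cases h0 : lam = 0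
  · subst h0
    simp only [norm_zero, zero_mul]
    positivity
  · have hre : -Real.tan θ * |lam.im| ≤ lam.re := arg_sector hθ0 hθπ h0 hlam
    have hKey := hkey lam.re lam.im (a ξ).re (a ξ).im hx (hsec ξ) hre
    have habs_lam : ‖lam‖ = Real.sqrt (lam.re ^ 2 + lam.im ^ 2) := by
      rw [Complex.norm_def, Complex.normSq_apply]; ring_nf
    have habs_sum : ‖lam + a ξ‖ =
        Real.sqrt ((lam.re + (a ξ).re) ^ 2 + (lam.im + (a ξ).im) ^ 2) := by
      rw [Complex.norm_def, Complex.normSq_apply, Complex.add_re, Complex.add_im]; ring_nf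
    have hlow : ε * (‖lam‖ + (a ξ).re) ≤ ‖lam + a ξ‖ := by
      rw [habs_lam, habs_sum]; exact hKey
    have hlam0 : 0 < ‖lam‖ := norm_pos_iff.mpr h0
    have habs_pos : 0 < ‖lam + a ξ‖ :=
      lt_of_lt_of_le (by positivity) hlow
    have hne : lam + a ξ ≠ 0 := fun hz => by simp [hz] at habs_pos
    have hsum : HasFDerivAt (fun ξ => lam + a ξ) (fderiv ℝ a ξ) ξ :=
      ((ha ξ).hasFDerivAt).const_add lam
    have hD : HasFDerivAt (fun ξ => (lam + a ξ)⁻¹)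
        ((-((lam + a ξ) ^ 2)⁻¹ : ℂ) • fderiv ℝ a ξ) ξ :=
      (hasDerivAt_inv hne).comp_hasFDerivAt ξ hsum
    rw [hD.fderiv, norm_smul (-((lam + a ξ) ^ 2)⁻¹ : ℂ) (fderiv ℝ a ξ)]
    have hnorm : ‖(-((lam + a ξ) ^ 2)⁻¹ : ℂ)‖ = (‖lam + a ξ‖ ^ 2)⁻¹ := by
      rw [norm_neg, norm_inv, norm_pow]
    rw [hnorm]
    have hsq' : (ε * (‖lam‖ + (a ξ).re)) * (ε * (‖lam‖ + (a ξ).re)) ≤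
        ‖lam + a ξ‖ * ‖lam + a ξ‖ :=
      mul_self_le_mul_self (by positivity) hlow
    have hQ : 4 * ε ^ 2 * (‖lam‖ * (a ξ).re) ≤ ‖lam + a ξ‖ ^ 2 := by
      nlinarith [hsq', mul_nonneg (sq_nonneg ε) (sq_nonneg (‖lam‖ - (a ξ).re))]
    have hden : 0 < 4 * ε ^ 2 * (‖lam‖ * (a ξ).re) := by positivity
    have hinv_le : (‖lam + a ξ‖ ^ 2)⁻¹ ≤
        (4 * ε ^ 2 * (‖lam‖ * (a ξ).re))⁻¹ :=
      inv_anti₀ hden hQ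
    have hstep : ‖lam‖ * ((‖lam + a ξ‖ ^ 2)⁻¹ * ‖fderiv ℝ a ξ‖) ≤
        ‖lam‖ * ((4 * ε ^ 2 * (‖lam‖ * (a ξ).re))⁻¹ *
          (C₁ * (1 + ‖ξ‖ ^ 2) ^ ((δ - 1) / 2))) := by
      refine mul_le_mul_of_nonneg_left
        (mul_le_mul hinv_le (hda ξ) (norm_nonneg _) (by positivity)) (norm_nonneg _)
    refine hstep.trans ?_
    have heq : ‖lam‖ * ((4 * ε ^ 2 * (‖lam‖ * (a ξ).re))⁻¹ *
        (C₁ * (1 + ‖ξ‖ ^ 2) ^ ((δ - 1) / 2))) =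
        C₁ * (1 + ‖ξ‖ ^ 2) ^ ((δ - 1) / 2) / (4 * ε ^ 2 * (a ξ).re) := by
      field_simp
    rw [heq]
    have hstep2 : C₁ * (1 + ‖ξ‖ ^ 2) ^ ((δ - 1) / 2) / (4 * ε ^ 2 * (a ξ).re) ≤
        C₁ * (1 + ‖ξ‖ ^ 2) ^ ((δ - 1) / 2) /
          (4 * ε ^ 2 * (c₀ * (1 + ‖ξ‖ ^ 2) ^ (δ / 2))) := by
      gcongr <;> first | exact hell ξ | positivity
    have hne1 : ((1 + ‖ξ‖ ^ 2 : ℝ) ^ (δ / 2)) ≠ 0 := (Real.rpow_pos_of_pos hX0 (δ / 2)).ne'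
    have hpow : (1 + ‖ξ‖ ^ 2 : ℝ) ^ ((δ - 1) / 2) / (1 + ‖ξ‖ ^ 2 : ℝ) ^ (δ / 2) =
        (1 + ‖ξ‖ ^ 2 : ℝ) ^ ((-1 : ℝ) / 2) := by
      rw [← Real.rpow_sub hX0]; congr 1; ring
    have hfin : C₁ * (1 + ‖ξ‖ ^ 2) ^ ((δ - 1) / 2) /
        (4 * ε ^ 2 * (c₀ * (1 + ‖ξ‖ ^ 2) ^ (δ / 2))) =
        C₁ / (4 * ε ^ 2 * c₀) *
          ((1 + ‖ξ‖ ^ 2) ^ ((δ - 1) / 2) / (1 + ‖ξ‖ ^ 2) ^ (δ / 2)) := by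
      field_simp
    refine hstep2.trans ?_
    rw [hfin, hpow]
end
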